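/- For positive reals a ≠ b and t ∈ (0,1): log I_t(a,b) = (1−t)∫₀¹ log(tα(b−a)+a) dα + t∫₀¹ log((1−t)α(b−a)+tb+(1−t)a) dα, where I_t(a,b) = (1/e)·((1−t)a + t·b)^{((1−2t)(tb+(1−t)a))/(t(1−t)(b−a))}·(b^{tb/(1−t)}/a^{((1−t)a)/t})^{1/(b−a)}. -/

import Mathlib

open Set MeasureTheory

/-- Integral representation of the logarithm of the weighted identric mean. -/
theorem log_weighted_identric_integral_rep (a b t : ℝ) (ha : 0 < a) (hb : 0 < b)
    (hab : a ≠ b) (ht : t ∈ Ioo (0:ℝ) 1) :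
    Real.log ((1 / Real.exp 1) *
        ((1 - t) * a + t * b) ^ ((1 - 2*t) * (t * b + (1 - t) * a) / (t * (1 - t) * (b - a))) *
        ((b ^ (t * b / (1 - t))) / (a ^ ((1 - t) * a / t))) ^ (1 / (b - a))) =
      (1 - t) * (∫ α in (0:ℝ)..1, Real.log (t * α * (b - a) + a)) +
        t * (∫ α in (0:ℝ)..1, Real.log ((1 - t) * α * (b - a) + t * b + (1 - t) * a)) := by
  obtain ⟨ht0, ht1⟩ := ht
  have ht1' : 0 < 1 - t := by linarith
  have hba : b - a ≠ 0 := sub_ne_zero.mpr (Ne.symm hab)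
  have hc1 : t * (b - a) ≠ 0 := mul_ne_zero (ne_of_gt ht0) hba
  have hc2 : (1 - t) * (b - a) ≠ 0 := mul_ne_zero (ne_of_gt ht1') hba
  have hm : 0 < t * b + (1 - t) * a := by positivity
  -- first integral
  have e1 : ∀ α : ℝ, t * α * (b - a) + a = (t * (b - a)) * α + a := fun α => by ring
  have e2 : ∀ α : ℝ, (1 - t) * α * (b - a) + t * b + (1 - t) * a
      = ((1 - t) * (b - a)) * α + (t * b + (1 - t) * a) := fun α => by ring
  have I1 : (∫ α in (0:ℝ)..1, Real.log (t * α * (b - a) + a))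
      = (t * (b - a))⁻¹ * ((t * (b - a) + a) * Real.log (t * (b - a) + a)
          - a * Real.log a - (t * (b - a) + a) + a) := by
    simp only [e1]
    rw [intervalIntegral.integral_comp_mul_add _ hc1]
    rw [integral_log]
    · simp [smul_eq_mul]
  have I2 : (∫ α in (0:ℝ)..1, Real.log ((1 - t) * α * (b - a) + t * b + (1 - t) * a))
      = ((1 - t) * (b - a))⁻¹ * (((1 - t) * (b - a) + (t * b + (1 - t) * a)) *
          Real.log ((1 - t) * (b - a) + (t * b + (1 - t) * a))
          - (t * b + (1 - t) * a) * Real.log (t * b + (1 - t) * a)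
          - ((1 - t) * (b - a) + (t * b + (1 - t) * a)) + (t * b + (1 - t) * a)) := by
    simp only [e2]
    rw [intervalIntegral.integral_comp_mul_add _ hc2]
    rw [integral_log]
    · simp [smul_eq_mul]
  rw [I1, I2]
  -- LHS expansion
  have hm' : 0 < (1 - t) * a + t * b := by positivity
  have hbp : (0:ℝ) < b ^ (t * b / (1 - t)) := Real.rpow_pos_of_pos hb _
  have hap : (0:ℝ) < a ^ ((1 - t) * a / t) := Real.rpow_pos_of_pos ha _
  have hmp : (0:ℝ) < ((1 - t) * a + t * b) ^
      ((1 - 2*t) * (t * b + (1 - t) * a) / (t * (1 - t) * (b - a))) :=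
    Real.rpow_pos_of_pos hm' _
  have hq : (0:ℝ) < (b ^ (t * b / (1 - t)) / a ^ ((1 - t) * a / t)) ^ (1 / (b - a)) :=
    Real.rpow_pos_of_pos (div_pos hbp hap) _
  rw [Real.log_mul (by positivity) (ne_of_gt hq),
      Real.log_mul (by positivity) (ne_of_gt hmp),
      Real.log_rpow hm', Real.log_rpow (div_pos hbp hap),
      Real.log_div (ne_of_gt hbp) (ne_of_gt hap),
      Real.log_rpow hb, Real.log_rpow ha, one_div, Real.log_inv, Real.log_exp]
  have key1 : t * (b - a) + a = t * b + (1 - t) * a := by ring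
  have key2 : (1 - t) * (b - a) + (t * b + (1 - t) * a) = b := by ring
  have key3 : (1 - t) * a + t * b = t * b + (1 - t) * a := by ring
  rw [key1, key2, key3]
  have hta : t ≠ 0 := ne_of_gt ht0
  have h1ta : 1 - t ≠ 0 := ne_of_gt ht1'
  field_simp
  ring
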